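/- Let (V, 𝒮) be a simplicial fan supported on ℝⁿ_{≥0}, let E ∈ 𝒮, and let F ∈ lk(E) be a maximal non-U-pyramid, i.e., F ∪ E is interior, F is not a U-pyramid, and every F′ ∈ lk(E) with F ⊊ F′ is a U-pyramid. Then n − |F ∪ E| = |𝒜_F|, i.e., the codimension of F ∪ E equals the number of apices of F. -/

import Mathlib

open scoped Classical

noncomputable section

/-- The conical hull (set of nonnegative linear combinations) of a finite set of
vectors in `ℝⁿ`. -/
def coneOf {n : ℕ} (F : Finset (Fin n → ℝ)) : Set (Fin n → ℝ) :=
  {x | ∃ lam : (Fin n → ℝ) → ℝ, (∀ v ∈ F, 0 ≤ lam v) ∧ x = ∑ v ∈ F, lam v • v}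

/-- A simplicial fan supported on `ℝⁿ_{≥0}`, encoding a geometric triangulation of
the `(n-1)`-dimensional simplex: a finite vertex set `V ⊆ ℝⁿ_{≥0} ∖ {0}` together
with a downward-closed collection of linearly independent finite subsets of `V`
(the faces, including `∅`) whose cones cover the nonnegative orthant and intersect
along common faces. -/
structure SimplicialFan (n : ℕ) where
  verts : Finset (Fin n → ℝ)
  faces : Finset (Finset (Fin n → ℝ))
  verts_nonneg : ∀ v ∈ verts, ∀ i, 0 ≤ v i
  verts_ne_zero : ∀ v ∈ verts, v ≠ 0
  faces_subset_verts : ∀ F ∈ faces, F ⊆ verts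
  empty_mem : ∅ ∈ faces
  indep : ∀ F ∈ faces, LinearIndependent ℝ (fun v : {x // x ∈ F} => (v : Fin n → ℝ))
  down_closed : ∀ F ∈ faces, ∀ F' ⊆ F, F' ∈ faces
  covers : (⋃ F ∈ faces, coneOf F) = {x : Fin n → ℝ | ∀ i, 0 ≤ x i}
  inter_cone : ∀ F ∈ faces, ∀ F' ∈ faces, coneOf F ∩ coneOf F' = coneOf (F ∩ F')

/-- `σ(F)`: the set of coordinates `ℓ` such that some `v ∈ F` has `v_ℓ ≠ 0`. -/
def suppSet {n : ℕ} (F : Finset (Fin n → ℝ)) : Finset (Fin n) :=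
  Finset.univ.filter fun ℓ => ∃ v ∈ F, v ℓ ≠ 0

/-- A face is interior if its support is all of `{1,…,n}`. -/
def IsInteriorFace {n : ℕ} (F : Finset (Fin n → ℝ)) : Prop :=
  suppSet F = Finset.univ

/-- The excess `e(F) = |σ(F)| − |F|`. -/
def excess {n : ℕ} (F : Finset (Fin n → ℝ)) : ℕ :=
  (suppSet F).card - F.card

/-- The link of a face `E`: faces `F` with `F ∩ E = ∅` and `F ∪ E ∈ 𝒮`. -/
def link {n : ℕ} (S : SimplicialFan n) (E : Finset (Fin n → ℝ)) :
    Finset (Finset (Fin n → ℝ)) :=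
  S.faces.filter fun F => F ∩ E = ∅ ∧ F ∪ E ∈ S.faces

/-- `F ∈ lk(E)` is a pyramid with apex `A ∈ F` if `F ∪ E` is interior but
`(F ∪ E) ∖ {A}` is not. -/
def IsPyramidApex {n : ℕ} (E F : Finset (Fin n → ℝ)) (A : Fin n → ℝ) : Prop :=
  A ∈ F ∧ IsInteriorFace (F ∪ E) ∧ ¬ IsInteriorFace ((F ∪ E).erase A)

/-- `𝒜_F`: the set of apices of `F` (relative to `E`). -/
def apices {n : ℕ} (E F : Finset (Fin n → ℝ)) : Finset (Fin n → ℝ) :=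
  F.filter fun A => IsPyramidApex E F A

/-- `V_A = {1,…,n} ∖ σ((F ∪ E) ∖ {A})`. -/
def baseDirs {n : ℕ} (E F : Finset (Fin n → ℝ)) (A : Fin n → ℝ) : Finset (Fin n) :=
  Finset.univ \ suppSet ((F ∪ E).erase A)

/-- `F` is a U-pyramid if `|V_A| = 1` for some apex `A` of `F`. -/
def IsUPyramid {n : ℕ} (E F : Finset (Fin n → ℝ)) : Prop :=
  ∃ A ∈ apices E F, (baseDirs E F A).card = 1

/-- A full partition of `F ∈ lk(E)`: a decomposition `F = F₁ ⊔ F₂ ⊔ 𝒜_F` with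
`F₁ ∪ 𝒜_F ∪ E` interior and `σ(F₂ ∪ E) = {1,…,n} ∖ ⋃_{A ∈ 𝒜_F} V_A`. -/
def IsFullPartition {n : ℕ} (E F F₁ F₂ : Finset (Fin n → ℝ)) : Prop :=
  F = F₁ ∪ F₂ ∪ apices E F ∧
  Disjoint F₁ F₂ ∧ Disjoint F₁ (apices E F) ∧ Disjoint F₂ (apices E F) ∧
  IsInteriorFace (F₁ ∪ apices E F ∪ E) ∧
  suppSet (F₂ ∪ E) = Finset.univ \ (apices E F).biUnion (baseDirs E F)

/-- The local `h`-polynomial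
`ℓ(𝒮, E; t) = Σ_{F ∈ 𝒮, E ⊆ F} (−1)^{n−|F|} t^{(n−|E|)−e(F)} (t−1)^{e(F)}`. -/
def localH {n : ℕ} (S : SimplicialFan n) (E : Finset (Fin n → ℝ)) : Polynomial ℤ :=
  ∑ F ∈ S.faces.filter (fun F => E ⊆ F),
    Polynomial.C ((-1 : ℤ) ^ (n - F.card)) *
      Polynomial.X ^ ((n - E.card) - excess F) * (Polynomial.X - 1) ^ (excess F)

namespace MaxNonU

lemma mem_suppSet {n : ℕ} {F : Finset (Fin n → ℝ)} {j : Fin n} :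
    j ∈ suppSet F ↔ ∃ v ∈ F, v j ≠ 0 := by
  simp [suppSet]

lemma suppSet_mono {n : ℕ} {F₁ F₂ : Finset (Fin n → ℝ)} (h : F₁ ⊆ F₂) :
    suppSet F₁ ⊆ suppSet F₂ := by
  intro j hj
  rcases mem_suppSet.1 hj with ⟨v, hv, hvj⟩
  exact mem_suppSet.2 ⟨v, h hv, hvj⟩

lemma unique_coeffs {n : ℕ} (H : Finset (Fin n → ℝ))
    (hind : LinearIndependent ℝ (fun v : {x // x ∈ H} => (v : Fin n → ℝ)))
    (a b : (Fin n → ℝ) → ℝ)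
    (hab : ∑ v ∈ H, a v • v = ∑ v ∈ H, b v • v) :
    ∀ v ∈ H, a v = b v := by
  have h0 : ∑ v : {x // x ∈ H}, (a v - b v) • (v : Fin n → ℝ) = 0 := by
    have : ∑ v ∈ H.attach, (a v.1 - b v.1) • (v.1 : Fin n → ℝ)
        = ∑ v ∈ H, (a v - b v) • v := Finset.sum_attach H (fun v => (a v - b v) • v)
    rw [Finset.univ_eq_attach, this]
    simp only [sub_smul, Finset.sum_sub_distrib, hab, sub_self]
  have := Fintype.linearIndependent_iff.1 hind (fun v => a v.1 - b v.1) h0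
  intro v hv
  have := this ⟨v, hv⟩
  simpa [sub_eq_zero] using this

/-- Key geometric lemma: for every interior-supported face `G` and every
coordinate `ℓ`, there is a face `H ⊇ G` such that `e_ℓ` is a linear combination
of `H` with nonnegative coefficients on `H \ G`. -/
lemma exists_face_rep {n : ℕ} (S : SimplicialFan n) (G : Finset (Fin n → ℝ))
    (hG : G ∈ S.faces) (ℓ : Fin n) :
    ∃ H ∈ S.faces, G ⊆ H ∧ ∃ μ : (Fin n → ℝ) → ℝ,
      (∀ u ∈ H, u ∉ G → 0 ≤ μ u) ∧ Pi.single ℓ (1:ℝ) = ∑ v ∈ H, μ v • v := by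
  classical
  set e : Fin n → ℝ := Pi.single ℓ (1:ℝ) with he
  set bary : Fin n → ℝ := ∑ v ∈ G, v with hbary
  have hbary_nonneg : ∀ i, 0 ≤ bary i := by
    intro i
    rw [hbary]
    rw [Finset.sum_apply]
    exact Finset.sum_nonneg fun v hv =>
      S.verts_nonneg v (S.faces_subset_verts G hG hv) i
  have he_nonneg : ∀ i, 0 ≤ e i := by
    intro i
    rw [he]
    rcases eq_or_ne i ℓ with h | h
    · subst h; simp
    · simp [Pi.single_apply, h]
  -- the perturbed points
  set t : ℕ → ℝ := fun j => 1 / (j + 1) with ht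
  have ht_pos : ∀ j : ℕ, 0 < t j := by
    intro j
    rw [ht]
    positivity
  set x : ℕ → (Fin n → ℝ) := fun j => bary + t j • e with hx
  have hx_mem : ∀ j : ℕ, ∃ H ∈ S.faces, x j ∈ coneOf H := by
    intro j
    have hxo : x j ∈ {y : Fin n → ℝ | ∀ i, 0 ≤ y i} := by
      intro i
      have := hbary_nonneg i
      have := he_nonneg i
      have := (ht_pos j).le
      simp only [hx, Pi.add_apply, Pi.smul_apply, smul_eq_mul]
      nlinarith
    rw [← S.covers] at hxo
    simpa using hxo
  choose f hf_mem hf_cone using hx_mem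
  -- pigeonhole: some face occurs for infinitely many j
  have : Finite {H // H ∈ S.faces} := inferInstance
  obtain ⟨H₀, hH₀inf⟩ :=
    Finite.exists_infinite_fiber (fun j => (⟨f j, hf_mem j⟩ : {H // H ∈ S.faces}))
  set T : Set ℕ := (fun j => (⟨f j, hf_mem j⟩ : {H // H ∈ S.faces})) ⁻¹' {H₀} with hT
  have hTinf : T.Infinite := Set.infinite_coe_iff.1 hH₀inf
  have hfT : ∀ j ∈ T, f j = H₀.1 := by
    intro j hj
    have : (⟨f j, hf_mem j⟩ : {H // H ∈ S.faces}) = H₀ := hj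
    exact congrArg Subtype.val this
  have hT_unbdd : ∀ N : ℕ, ∃ j ∈ T, N < j := by
    intro N
    by_contra h
    push_neg at h
    exact hTinf ((Set.finite_Iic N).subset fun j hj => h j hj)
  have hcone : ∀ j ∈ T, x j ∈ coneOf H₀.1 := by
    intro j hj
    have := hf_cone j
    rwa [hfT j hj] at this
  have hH₀ : H₀.1 ∈ S.faces := H₀.2
  have hindH : LinearIndependent ℝ (fun v : {y // y ∈ H₀.1} => (v : Fin n → ℝ)) :=
    S.indep H₀.1 hH₀
  -- pick two indices
  obtain ⟨j₁, hj₁T, _⟩ := hT_unbdd 0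
  obtain ⟨j₂, hj₂T, hj₂⟩ := hT_unbdd j₁
  have ht12 : t j₂ < t j₁ := by
    rw [ht]
    apply one_div_lt_one_div_of_lt
    · positivity
    · exact_mod_cast Nat.add_lt_add_right hj₂ 1
  have htd_pos : 0 < t j₁ - t j₂ := by linarith
  obtain ⟨lam₁, hlam₁0, hlam₁⟩ := hcone j₁ hj₁T
  obtain ⟨lam₂, hlam₂0, hlam₂⟩ := hcone j₂ hj₂T
  set μ : (Fin n → ℝ) → ℝ := fun v => (lam₁ v - lam₂ v) / (t j₁ - t j₂) with hμ
  set β : (Fin n → ℝ) → ℝ := fun v => lam₁ v - t j₁ * μ v with hβ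
  have hsum_e : ∑ v ∈ H₀.1, μ v • v = e := by
    have hdiff : ∑ v ∈ H₀.1, (lam₁ v - lam₂ v) • v = (t j₁ - t j₂) • e := by
      have : x j₁ - x j₂ = (t j₁ - t j₂) • e := by
        simp only [hx]
        module
      rw [← this, hlam₁, hlam₂, ← Finset.sum_sub_distrib]
      simp [sub_smul]
    calc ∑ v ∈ H₀.1, μ v • v = (t j₁ - t j₂)⁻¹ • ∑ v ∈ H₀.1, (lam₁ v - lam₂ v) • v := by
          rw [Finset.smul_sum]
          apply Finset.sum_congr rfl
          intro v _
          rw [hμ, smul_smul]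
          congr 1
          field_simp
      _ = (t j₁ - t j₂)⁻¹ • ((t j₁ - t j₂) • e) := by rw [hdiff]
      _ = e := by
          rw [smul_smul, inv_mul_cancel₀ htd_pos.ne', one_smul]
  have hsum_bary : ∑ v ∈ H₀.1, β v • v = bary := by
    have : ∑ v ∈ H₀.1, β v • v
        = ∑ v ∈ H₀.1, lam₁ v • v - t j₁ • ∑ v ∈ H₀.1, μ v • v := by
      rw [Finset.smul_sum, ← Finset.sum_sub_distrib]
      apply Finset.sum_congr rfl
      intro v _
      rw [hβ, sub_smul, smul_smul]
    rw [this, hsum_e, ← hlam₁, hx]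
    module
  have hrep_t : ∀ j ∈ T, ∀ v ∈ H₀.1, ∀ lam : (Fin n → ℝ) → ℝ,
      x j = ∑ w ∈ H₀.1, lam w • w → lam v = β v + t j * μ v := by
    intro j hj v hv lam hlam
    have hxj : x j = ∑ w ∈ H₀.1, (β w + t j * μ w) • w := by
      have : ∑ w ∈ H₀.1, (β w + t j * μ w) • w
          = ∑ w ∈ H₀.1, β w • w + t j • ∑ w ∈ H₀.1, μ w • w := by
        rw [Finset.smul_sum, ← Finset.sum_add_distrib]
        apply Finset.sum_congr rfl
        intro w _
        rw [add_smul, smul_smul]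
      rw [this, hsum_e, hsum_bary, hx]
    exact unique_coeffs H₀.1 hindH lam (fun w => β w + t j * μ w)
      (by rw [← hlam, hxj]) v hv
  have hβ_nonneg : ∀ v ∈ H₀.1, 0 ≤ β v := by
    intro v hv
    by_contra hneg
    push_neg at hneg
    have hkey : ∀ j ∈ T, 0 ≤ β v + t j * μ v := by
      intro j hj
      obtain ⟨lam, hlam0, hlam⟩ := hcone j hj
      have := hrep_t j hj v hv lam hlam
      rw [← this]
      exact hlam0 v hv
    have hμv_pos : 0 < μ v := by
      by_contra hμv
      push_neg at hμv
      have := hkey j₁ hj₁T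
      nlinarith [ht_pos j₁]
    obtain ⟨j, hjT, hjN⟩ := hT_unbdd ⌈μ v / (-β v)⌉₊
    have h1 : μ v / (-β v) < (j : ℝ) + 1 := by
      have h2 : (⌈μ v / (-β v)⌉₊ : ℝ) < (j : ℝ) + 1 := by
        exact_mod_cast Nat.lt_add_one_of_le hjN.le
      exact lt_of_le_of_lt (Nat.le_ceil _) h2
    have hβv_pos : 0 < -β v := by linarith
    have htj : t j * μ v < -β v := by
      rw [ht]
      rw [div_lt_iff₀ hβv_pos] at h1
      have hj1 : (0:ℝ) < (j:ℝ) + 1 := by positivity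
      rw [div_mul_eq_mul_div, div_lt_iff₀ hj1]
      nlinarith
    have := hkey j hjT
    linarith
  -- bary is in coneOf H₀ and coneOf G, hence in coneOf (G ∩ H₀)
  have hbary_coneH : bary ∈ coneOf H₀.1 := ⟨β, hβ_nonneg, hsum_bary.symm⟩
  have hbary_coneG : bary ∈ coneOf G :=
    ⟨fun _ => 1, fun _ _ => zero_le_one, by simp [hbary]⟩
  have hbary_inter : bary ∈ coneOf (G ∩ H₀.1) := by
    rw [← S.inter_cone G hG H₀.1 hH₀]
    exact ⟨hbary_coneG, hbary_coneH⟩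
  obtain ⟨γ, hγ0, hγ⟩ := hbary_inter
  have hGH : G ⊆ H₀.1 := by
    set γ' : (Fin n → ℝ) → ℝ := fun v => if v ∈ H₀.1 then γ v else 0 with hγ'
    have hsum' : ∑ v ∈ G, γ' v • v = ∑ v ∈ G ∩ H₀.1, γ v • v := by
      rw [← Finset.sum_subset (Finset.inter_subset_left (s₂ := H₀.1))]
      · apply Finset.sum_congr rfl
        intro v hv
        have : v ∈ H₀.1 := (Finset.mem_inter.1 hv).2
        simp [hγ', this]
      · intro v hvG hvGH
        have : v ∉ H₀.1 := fun h => hvGH (Finset.mem_inter.2 ⟨hvG, h⟩)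
        simp [hγ', this]
    have heq : ∑ v ∈ G, γ' v • v = ∑ v ∈ G, (fun _ => (1:ℝ)) v • v := by
      rw [hsum', ← hγ, hbary]
      simp
    have := unique_coeffs G (S.indep G hG) γ' (fun _ => 1) heq
    intro v hv
    by_contra hvH
    have := this v hv
    simp [hγ', hvH] at this
  -- identify β on H₀
  have hβ_id : ∀ v ∈ H₀.1, β v = if v ∈ G then 1 else 0 := by
    apply unique_coeffs H₀.1 hindH β (fun v => if v ∈ G then 1 else 0)
    rw [hsum_bary, hbary]
    have h1 : ∑ v ∈ G, (if v ∈ G then (1:ℝ) else 0) • v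
        = ∑ v ∈ H₀.1, (if v ∈ G then (1:ℝ) else 0) • v := by
      apply Finset.sum_subset hGH
      intro v _ hvG
      simp [hvG]
    rw [← h1]
    apply Finset.sum_congr rfl
    intro v hv
    simp [hv]
  refine ⟨H₀.1, hH₀, hGH, μ, ?_, hsum_e.symm⟩
  intro u huH huG
  have hβu : β u = 0 := by
    rw [hβ_id u huH]
    simp [huG]
  obtain ⟨lam, hlam0, hlam⟩ := hcone j₁ hj₁T
  have := hrep_t j₁ hj₁T u huH lam hlam
  rw [hβu, zero_add] at this
  have h0 : 0 ≤ t j₁ * μ u := this ▸ hlam0 u huH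
  exact nonneg_of_mul_nonneg_right h0 (ht_pos j₁)
lemma mem_baseDirs_iff {n : ℕ} {E F : Finset (Fin n → ℝ)} {A : Fin n → ℝ} {j : Fin n} :
    j ∈ baseDirs E F A ↔ ∀ v ∈ F ∪ E, v ≠ A → v j = 0 := by
  simp only [baseDirs, Finset.mem_sdiff, Finset.mem_univ, true_and, mem_suppSet]
  push_neg
  constructor
  · intro h v hv hvA
    exact h v (Finset.mem_erase.2 ⟨hvA, hv⟩)
  · intro h v hv
    exact h v (Finset.mem_erase.1 hv).2 (Finset.mem_erase.1 hv).1

lemma apex_pos {n : ℕ} (S : SimplicialFan n) {E F : Finset (Fin n → ℝ)}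
    (hGf : F ∪ E ∈ S.faces) (hint : IsInteriorFace (F ∪ E))
    {A : Fin n → ℝ} (hA : A ∈ apices E F) {j : Fin n} (hj : j ∈ baseDirs E F A) :
    0 < A j := by
  have hAF : A ∈ F := (Finset.mem_filter.1 hA).1
  have hAG : A ∈ F ∪ E := Finset.mem_union_left _ hAF
  have hAnn : 0 ≤ A j := S.verts_nonneg A (S.faces_subset_verts _ hGf hAG) j
  rcases hAnn.lt_or_eq with h | h
  · exact h
  · exfalso
    have hju : j ∈ suppSet (F ∪ E) := by rw [hint]; exact Finset.mem_univ j
    rcases mem_suppSet.1 hju with ⟨v, hv, hvj⟩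
    rcases eq_or_ne v A with rfl | hvA
    · exact hvj h.symm
    · exact hvj (mem_baseDirs_iff.1 hj v hv hvA)

lemma apex_eq_of_mem_baseDirs {n : ℕ} (S : SimplicialFan n) {E F : Finset (Fin n → ℝ)}
    (hGf : F ∪ E ∈ S.faces) (hint : IsInteriorFace (F ∪ E))
    {A B : Fin n → ℝ} (hA : A ∈ apices E F) (hB : B ∈ apices E F) {j : Fin n}
    (hjA : j ∈ baseDirs E F A) (hjB : j ∈ baseDirs E F B) : A = B := by
  by_contra hne
  have hAG : A ∈ F ∪ E := Finset.mem_union_left _ (Finset.mem_filter.1 hA).1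
  have h0 : A j = 0 := mem_baseDirs_iff.1 hjB A hAG hne
  exact (apex_pos S hGf hint hA hjA).ne' h0

lemma two_le_card_baseDirs {n : ℕ} {E F : Finset (Fin n → ℝ)}
    (hnotU : ¬ IsUPyramid E F) {A : Fin n → ℝ} (hA : A ∈ apices E F) :
    2 ≤ (baseDirs E F A).card := by
  have hap : IsPyramidApex E F A := (Finset.mem_filter.1 hA).2
  have hne : (baseDirs E F A).Nonempty := by
    rw [baseDirs, Finset.sdiff_nonempty]
    intro hsub
    exact hap.2.2 (Finset.eq_univ_iff_forall.2 fun j => hsub (Finset.mem_univ j))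
  have h1 : (baseDirs E F A).card ≠ 1 := fun h => hnotU ⟨A, hA, h⟩
  have h2 : 1 ≤ (baseDirs E F A).card := Finset.card_pos.2 hne
  omega

lemma max_lemma {n : ℕ} (S : SimplicialFan n) {E F : Finset (Fin n → ℝ)}
    (hF : F ∈ link S E) (hint : IsInteriorFace (F ∪ E))
    (hmax : ∀ F' ∈ link S E, F ⊂ F' → IsUPyramid E F')
    {H : Finset (Fin n → ℝ)} (hH : H ∈ S.faces) (hGH : F ∪ E ⊆ H)
    (hne : F ∪ E ≠ H) :
    ∃ B ∈ apices E F, ∃ p, Finset.univ \ suppSet (H.erase B) = {p} := by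
  classical
  obtain ⟨hFf, hFE, hFEf⟩ : F ∈ S.faces ∧ F ∩ E = ∅ ∧ F ∪ E ∈ S.faces := by
    have := Finset.mem_filter.1 hF
    exact ⟨this.1, this.2.1, this.2.2⟩
  set F' : Finset (Fin n → ℝ) := H \ E with hF'def
  have hEH : E ⊆ H := (Finset.subset_union_right).trans hGH
  have hF'U : F' ∪ E = H := Finset.sdiff_union_of_subset hEH
  have hF'f : F' ∈ S.faces := S.down_closed H hH F' (Finset.sdiff_subset)
  have hF'link : F' ∈ link S E := by
    rw [link, Finset.mem_filter]
    refine ⟨hF'f, ?_, by rw [hF'U]; exact hH⟩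
    ext v
    simp only [hF'def, Finset.mem_inter, Finset.mem_sdiff, Finset.notMem_empty, iff_false]
    tauto
  have hFF' : F ⊂ F' := by
    constructor
    · intro v hv
      have hvH : v ∈ H := hGH (Finset.mem_union_left _ hv)
      have hvE : v ∉ E := by
        intro hvE
        have : v ∈ F ∩ E := Finset.mem_inter.2 ⟨hv, hvE⟩
        rw [hFE] at this
        exact absurd this (Finset.notMem_empty v)
      exact Finset.mem_sdiff.2 ⟨hvH, hvE⟩
    · intro hsub
      apply hne
      have : F' ⊆ F := hsub
      have h1 : H ⊆ F ∪ E := by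
        intro v hv
        rcases Finset.mem_union.1 (by rw [← hF'U] at hv; exact hv) with h | h
        · exact Finset.mem_union_left _ (this h)
        · exact Finset.mem_union_right _ h
      exact Finset.Subset.antisymm hGH h1
  obtain ⟨B, hBap', hcard⟩ := hmax F' hF'link hFF'
  have hbd : baseDirs E F' B = Finset.univ \ suppSet (H.erase B) := by
    rw [baseDirs, hF'U]
  rw [hbd] at hcard
  obtain ⟨p, hp⟩ := Finset.card_eq_one.1 hcard
  have hpB : p ∈ Finset.univ \ suppSet (H.erase B) := by rw [hp]; exact Finset.mem_singleton_self p
  have hBF' : B ∈ F' := (Finset.mem_filter.1 hBap').1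
  have hBE : B ∉ E := (Finset.mem_sdiff.1 hBF').2
  have hBH : B ∈ H := (Finset.mem_sdiff.1 hBF').1
  -- B must belong to F ∪ E, hence to F
  have hBG : B ∈ F ∪ E := by
    by_contra hBG
    have hsub : F ∪ E ⊆ H.erase B := by
      intro v hv
      exact Finset.mem_erase.2 ⟨fun h => hBG (h ▸ hv), hGH hv⟩
    have : suppSet (H.erase B) = Finset.univ :=
      Finset.univ_subset_iff.1 (by rw [← hint]; exact suppSet_mono hsub)
    rw [this, Finset.sdiff_self] at hp
    exact absurd hp.symm (Finset.singleton_ne_empty p)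
  have hBF : B ∈ F := by
    rcases Finset.mem_union.1 hBG with h | h
    · exact h
    · exact absurd h hBE
  have hnint : ¬ IsInteriorFace ((F ∪ E).erase B) := by
    intro hcontra
    have hsub : (F ∪ E).erase B ⊆ H.erase B := Finset.erase_subset_erase B hGH
    have : suppSet (H.erase B) = Finset.univ :=
      Finset.univ_subset_iff.1 (by rw [← hcontra]; exact suppSet_mono hsub)
    rw [this, Finset.sdiff_self] at hp
    exact absurd hp.symm (Finset.singleton_ne_empty p)
  exact ⟨B, Finset.mem_filter.2 ⟨hBF, hBF, hint, hnint⟩, p, hp⟩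

lemma key {n : ℕ} (S : SimplicialFan n) {E F : Finset (Fin n → ℝ)}
    (hF : F ∈ link S E) (hint : IsInteriorFace (F ∪ E))
    (hnotU : ¬ IsUPyramid E F)
    (hmax : ∀ F' ∈ link S E, F ⊂ F' → IsUPyramid E F') (ℓ : Fin n) :
    (∃ c : (Fin n → ℝ) → ℝ, Pi.single ℓ (1:ℝ) = ∑ v ∈ F ∪ E, c v • v) ∨
    (∃ B ∈ apices E F, ℓ ∈ baseDirs E F B ∧ (baseDirs E F B).card = 2) := by
  classical
  set G : Finset (Fin n → ℝ) := F ∪ E with hGdef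
  have hGf : G ∈ S.faces := (Finset.mem_filter.1 hF).2.2
  obtain ⟨H, hH, hGH, μ, hμ0, hrep⟩ := exists_face_rep S G hGf ℓ
  set T : Finset (Fin n → ℝ) := H.filter (fun u => u ∉ G ∧ μ u ≠ 0) with hTdef
  have hTfacts : ∀ u ∈ T, u ∈ H ∧ u ∉ G ∧ 0 < μ u := by
    intro u hu
    have hm := Finset.mem_filter.1 hu
    exact ⟨hm.1, hm.2.1, lt_of_le_of_ne (hμ0 u hm.1 hm.2.1) (Ne.symm hm.2.2)⟩
  set H'' : Finset (Fin n → ℝ) := G ∪ T with hH''def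
  have hsub : H'' ⊆ H := Finset.union_subset hGH (Finset.filter_subset _ _)
  have hH''f : H'' ∈ S.faces := S.down_closed H hH H'' hsub
  have hrep'' : Pi.single ℓ (1:ℝ) = ∑ v ∈ H'', μ v • v := by
    rw [hrep]
    symm
    apply Finset.sum_subset hsub
    intro v hvH hvH''
    have hvG : v ∉ G := fun h => hvH'' (Finset.mem_union_left _ h)
    have hvT : v ∉ T := fun h => hvH'' (Finset.mem_union_right _ h)
    have : μ v = 0 := by
      by_contra hμv
      exact hvT (Finset.mem_filter.2 ⟨hvH, hvG, hμv⟩)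
    rw [this, zero_smul]
  by_cases hT : T = ∅
  · left
    refine ⟨μ, ?_⟩
    rw [hrep'', hH''def, hT, Finset.union_empty]
  · right
    obtain ⟨u₀, hu₀⟩ := Finset.nonempty_iff_ne_empty.2 hT
    have hne : G ≠ H'' := by
      intro h
      exact (hTfacts u₀ hu₀).2.1 (h ▸ Finset.mem_union_right _ hu₀)
    obtain ⟨B, hB, p, hp⟩ := max_lemma S hF hint hmax hH''f Finset.subset_union_left hne
    have hBF : B ∈ F := (Finset.mem_filter.1 hB).1
    have hBG : B ∈ G := Finset.mem_union_left _ hBF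
    have hvp : ∀ v ∈ H'', v ≠ B → v p = 0 := by
      intro v hv hvB
      have hpmem : p ∈ Finset.univ \ suppSet (H''.erase B) := by
        rw [hp]; exact Finset.mem_singleton_self p
      have := (Finset.mem_sdiff.1 hpmem).2
      rw [mem_suppSet] at this
      push_neg at this
      exact this v (Finset.mem_erase.2 ⟨hvB, hv⟩)
    have hpV : p ∈ baseDirs E F B :=
      mem_baseDirs_iff.2 fun v hv hvB => hvp v (Finset.mem_union_left _ hv) hvB
    have hcover : ∀ j ∈ baseDirs E F B, j ≠ p → ∃ u ∈ T, u j ≠ 0 := by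
      intro j hj hjp
      have hjsupp : j ∈ suppSet (H''.erase B) := by
        by_contra hjs
        have : j ∈ Finset.univ \ suppSet (H''.erase B) :=
          Finset.mem_sdiff.2 ⟨Finset.mem_univ j, hjs⟩
        rw [hp, Finset.mem_singleton] at this
        exact hjp this
      obtain ⟨v, hv, hvj⟩ := mem_suppSet.1 hjsupp
      have hvB : v ≠ B := (Finset.mem_erase.1 hv).1
      have hvH'' : v ∈ H'' := (Finset.mem_erase.1 hv).2
      rcases Finset.mem_union.1 hvH'' with h | h
      · exact absurd (mem_baseDirs_iff.1 hj v h hvB) hvj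
      · exact ⟨v, h, hvj⟩
    have hdisj : Disjoint G T := by
      rw [Finset.disjoint_left]
      intro a haG haT
      exact (hTfacts a haT).2.1 haG
    have eval : ∀ j, (if j = ℓ then (1:ℝ) else 0)
        = ∑ v ∈ G, μ v * v j + ∑ v ∈ T, μ v * v j := by
      intro j
      have h1 := congrFun hrep'' j
      rw [Finset.sum_apply] at h1
      have h2 : ∑ v ∈ H'', (μ v • v) j = ∑ v ∈ H'', μ v * v j := by
        apply Finset.sum_congr rfl
        intro v _
        simp
      rw [h2, hH''def, Finset.sum_union hdisj] at h1
      rw [← h1, Pi.single_apply]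
    have hGsum : ∀ j ∈ baseDirs E F B, ∑ v ∈ G, μ v * v j = μ B * B j := by
      intro j hj
      apply Finset.sum_eq_single B
      · intro v hv hvB
        rw [mem_baseDirs_iff.1 hj v hv hvB, mul_zero]
      · intro h
        exact absurd hBG h
    have hvert_nonneg : ∀ v ∈ T, ∀ j, 0 ≤ v j := by
      intro v hv j
      exact S.verts_nonneg v (S.faces_subset_verts H hH ((hTfacts v hv).1)) j
    have hBp_pos : 0 < B p := apex_pos S hGf hint hB hpV
    have hTp : ∑ v ∈ T, μ v * v p = 0 := by
      apply Finset.sum_eq_zero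
      intro v hv
      have hvB : v ≠ B := fun h => (hTfacts v hv).2.1 (h ▸ hBG)
      rw [hvp v (Finset.mem_union_right _ hv) hvB, mul_zero]
    have hp_eq : (if p = ℓ then (1:ℝ) else 0) = μ B * B p := by
      have := eval p
      rw [hGsum p hpV, hTp, add_zero] at this
      exact this
    have hcard2 : 2 ≤ (baseDirs E F B).card := two_le_card_baseDirs hnotU hB
    -- first: p ≠ ℓ
    have hpℓ : p ≠ ℓ := by
      intro hpl
      have hμB_pos : 0 < μ B := by
        rw [if_pos hpl] at hp_eq
        nlinarith
      obtain ⟨a, ha, b, hb, hab⟩ := Finset.one_lt_card.1 (lt_of_lt_of_le one_lt_two hcard2)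
      have hj : ∃ j ∈ baseDirs E F B, j ≠ p := by
        rcases eq_or_ne a p with rfl | h
        · exact ⟨b, hb, fun hbp => hab hbp.symm⟩
        · exact ⟨a, ha, h⟩
      obtain ⟨j, hjV, hjp⟩ := hj
      have hjℓ : j ≠ ℓ := hpl ▸ hjp
      have hBj_pos : 0 < B j := apex_pos S hGf hint hB hjV
      have hTsum_nonneg : 0 ≤ ∑ v ∈ T, μ v * v j :=
        Finset.sum_nonneg fun v hv =>
          mul_nonneg (hTfacts v hv).2.2.le (hvert_nonneg v hv j)
      have := eval j
      rw [hGsum j hjV, if_neg hjℓ] at this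
      nlinarith
    have hμB : μ B = 0 := by
      rw [if_neg hpℓ] at hp_eq
      have := hBp_pos
      nlinarith [hp_eq]
    have hTzero : ∀ j ∈ baseDirs E F B, j ≠ p → j ≠ ℓ → ∀ v ∈ T, v j = 0 := by
      intro j hjV hjp hjℓ v hv
      have hTsum : ∑ v ∈ T, μ v * v j = 0 := by
        have := eval j
        rw [hGsum j hjV, if_neg hjℓ, hμB, zero_mul, zero_add] at this
        exact this.symm
      have hterm := (Finset.sum_eq_zero_iff_of_nonneg fun w hw =>
        mul_nonneg (hTfacts w hw).2.2.le (hvert_nonneg w hw j)).1 hTsum v hv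
      rcases mul_eq_zero.1 hterm with h | h
      · exact absurd h (hTfacts v hv).2.2.ne'
      · exact h
    have hℓV : ℓ ∈ baseDirs E F B := by
      by_contra hℓV
      obtain ⟨a, ha, b, hb, hab⟩ := Finset.one_lt_card.1 (lt_of_lt_of_le one_lt_two hcard2)
      have hja : ∃ j ∈ baseDirs E F B, j ≠ p := by
        rcases eq_or_ne a p with rfl | h
        · exact ⟨b, hb, fun hbp => hab hbp.symm⟩
        · exact ⟨a, ha, h⟩
      obtain ⟨j, hjV, hjp⟩ := hja
      have hjℓ : j ≠ ℓ := fun h => hℓV (h ▸ hjV)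
      obtain ⟨u, hu, huj⟩ := hcover j hjV hjp
      exact huj (hTzero j hjV hjp hjℓ u hu)
    have hVB : baseDirs E F B = {p, ℓ} := by
      apply Finset.Subset.antisymm
      · intro j hj
        rw [Finset.mem_insert, Finset.mem_singleton]
        by_contra hcon
        push_neg at hcon
        obtain ⟨u, hu, huj⟩ := hcover j hj hcon.1
        exact huj (hTzero j hj hcon.1 hcon.2 u hu)
      · intro j hj
        rcases Finset.mem_insert.1 hj with rfl | h
        · exact hpV
        · rw [Finset.mem_singleton] at h
          exact h ▸ hℓV
    refine ⟨B, hB, hℓV, ?_⟩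
    rw [hVB, Finset.card_insert_of_notMem (by simp [hpℓ]), Finset.card_singleton]

lemma eq_sum_single {n : ℕ} (x : Fin n → ℝ) :
    x = ∑ i, x i • (Pi.single i (1:ℝ) : Fin n → ℝ) := by
  ext j
  rw [Finset.sum_apply]
  have : ∀ i ∈ Finset.univ, (x i • (Pi.single i (1:ℝ) : Fin n → ℝ)) j
      = if j = i then x i else 0 := by
    intro i _
    simp [Pi.single_apply, mul_comm]
  rw [Finset.sum_congr rfl this, Finset.sum_ite_eq]
  simp

end MaxNonU

/-- If `F ∈ lk(E)` is a maximal non-U-pyramid (`F ∪ E` interior, `F` not a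
U-pyramid, and every strictly larger face of `lk(E)` is a U-pyramid), then the
codimension `n − |F ∪ E|` equals the number of apices `|𝒜_F|`. -/
theorem maximal_nonUPyramid_codim_eq_card_apices {n : ℕ} (S : SimplicialFan n)
    (E : Finset (Fin n → ℝ)) (hE : E ∈ S.faces)
    (F : Finset (Fin n → ℝ)) (hF : F ∈ link S E)
    (hint : IsInteriorFace (F ∪ E))
    (hnotU : ¬ IsUPyramid E F)
    (hmax : ∀ F' ∈ link S E, F ⊂ F' → IsUPyramid E F') :
    n - (F ∪ E).card = (apices E F).card := by
  classical
  open MaxNonU in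
  set G : Finset (Fin n → ℝ) := F ∪ E with hGdef
  have hGf : G ∈ S.faces := (Finset.mem_filter.1 hF).2.2
  -- every apex has exactly two base directions
  have hcard2 : ∀ A ∈ apices E F, (baseDirs E F A).card = 2 := by
    intro A hA
    have h2 : 2 ≤ (baseDirs E F A).card := MaxNonU.two_le_card_baseDirs hnotU hA
    obtain ⟨ℓ, hℓ⟩ : (baseDirs E F A).Nonempty :=
      Finset.card_pos.1 (by omega)
    rcases MaxNonU.key S hF hint hnotU hmax ℓ with ⟨c, hc⟩ | ⟨B, hB, hℓB, hcard⟩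
    · exfalso
      have hev : ∀ j, (if j = ℓ then (1:ℝ) else 0) = ∑ v ∈ G, c v * v j := by
        intro j
        have h1 := congrFun hc j
        rw [Pi.single_apply, Finset.sum_apply] at h1
        rw [h1]
        apply Finset.sum_congr rfl
        intro v _
        simp
      obtain ⟨a, ha, b, hb, hab⟩ := Finset.one_lt_card.1 (lt_of_lt_of_le one_lt_two h2)
      have hj : ∃ j ∈ baseDirs E F A, j ≠ ℓ := by
        rcases eq_or_ne a ℓ with rfl | h
        · exact ⟨b, hb, fun hbl => hab hbl.symm⟩
        · exact ⟨a, ha, h⟩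
      obtain ⟨j, hjV, hjℓ⟩ := hj
      have hGsum : ∀ i ∈ baseDirs E F A, ∑ v ∈ G, c v * v i = c A * A i := by
        intro i hi
        apply Finset.sum_eq_single A
        · intro v hv hvA
          rw [MaxNonU.mem_baseDirs_iff.1 hi v hv hvA, mul_zero]
        · intro h
          exact absurd (Finset.mem_union_left _ (Finset.mem_filter.1 hA).1) h
      have h3 := hev j
      rw [hGsum j hjV, if_neg hjℓ] at h3
      have h4 := hev ℓ
      rw [hGsum ℓ hℓ, if_pos rfl] at h4
      have hAj : 0 < A j := MaxNonU.apex_pos S hGf hint hA hjV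
      have hAℓ : 0 < A ℓ := MaxNonU.apex_pos S hGf hint hA hℓ
      have hcA : c A = 0 := by
        rcases mul_eq_zero.1 h3.symm with h | h
        · exact h
        · exact absurd h hAj.ne'
      rw [hcA, zero_mul] at h4
      norm_num at h4
    · have hBA : B = A := MaxNonU.apex_eq_of_mem_baseDirs S hGf hint hB hA hℓB hℓ
      rwa [hBA] at hcard
  -- coordinates not covered by any apex are in the span of G
  have hR : ∀ j : Fin n, (∀ A ∈ apices E F, j ∉ baseDirs E F A) →
      ∃ c : (Fin n → ℝ) → ℝ, Pi.single j (1:ℝ) = ∑ v ∈ G, c v • v := by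
    intro j hj
    rcases MaxNonU.key S hF hint hnotU hmax j with ⟨c, hc⟩ | ⟨B, hB, hjB, _⟩
    · exact ⟨c, hc⟩
    · exact absurd hjB (hj B hB)
  -- choose the two base directions of each apex
  have hex : ∀ A, A ∈ apices E F →
      ∃ a b : Fin n, a ≠ b ∧ baseDirs E F A = {a, b} := by
    intro A hA
    exact Finset.card_eq_two.1 (hcard2 A hA)
  choose la pa hlapa hV using hex
  have hla_mem : ∀ A (hA : A ∈ apices E F), la A hA ∈ baseDirs E F A := by
    intro A hA
    rw [hV A hA]
    exact Finset.mem_insert_self _ _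
  have hpa_mem : ∀ A (hA : A ∈ apices E F), pa A hA ∈ baseDirs E F A := by
    intro A hA
    rw [hV A hA]
    exact Finset.mem_insert_of_mem (Finset.mem_singleton_self _)
  have hapexG : ∀ A, A ∈ apices E F → A ∈ G := fun A hA =>
    Finset.mem_union_left _ (Finset.mem_filter.1 hA).1
  have hpriv : ∀ A, A ∈ apices E F → ∀ j ∈ baseDirs E F A,
      ∀ v ∈ G, v ≠ A → v j = 0 := by
    intro A hA j hj v hv hvA
    exact MaxNonU.mem_baseDirs_iff.1 hj v hv hvA
  -- the candidate basis
  set bb : ({x // x ∈ G} ⊕ {A // A ∈ apices E F}) → (Fin n → ℝ) :=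
    Sum.elim (fun v => (v : Fin n → ℝ)) (fun A => Pi.single (la A.1 A.2) (1:ℝ)) with hbb
  -- linear independence
  have hli : LinearIndependent ℝ bb := by
    rw [Fintype.linearIndependent_iff]
    intro g hg
    rw [Fintype.sum_sum_type] at hg
    simp only [hbb, Sum.elim_inl, Sum.elim_inr] at hg
    have hev : ∀ j : Fin n,
        (∑ v : {x // x ∈ G}, g (Sum.inl v) * (v : Fin n → ℝ) j)
        + (∑ A : {A // A ∈ apices E F}, g (Sum.inr A)
            * (Pi.single (la A.1 A.2) (1:ℝ) : Fin n → ℝ) j) = 0 := by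
      intro j
      have h1 := congrFun hg j
      rw [Pi.add_apply, Finset.sum_apply, Finset.sum_apply] at h1
      simpa using h1
    -- every inl-apex coefficient vanishes
    have hinl_apex : ∀ (A : Fin n → ℝ) (hA : A ∈ apices E F),
        g (Sum.inl ⟨A, hapexG A hA⟩) = 0 := by
      intro A hA
      have hfst : ∑ v : {x // x ∈ G}, g (Sum.inl v) * (v : Fin n → ℝ) (pa A hA)
          = g (Sum.inl ⟨A, hapexG A hA⟩) * A (pa A hA) := by
        apply Fintype.sum_eq_single
        intro v hvne
        have hvA : (v : Fin n → ℝ) ≠ A := by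
          intro h
          exact hvne (Subtype.ext h)
        rw [hpriv A hA (pa A hA) (hpa_mem A hA) v v.2 hvA, mul_zero]
      have hsnd : ∑ A' : {A // A ∈ apices E F}, g (Sum.inr A')
          * (Pi.single (la A'.1 A'.2) (1:ℝ) : Fin n → ℝ) (pa A hA) = 0 := by
        apply Finset.sum_eq_zero
        intro A' _
        have hne : la A'.1 A'.2 ≠ pa A hA := by
          intro h
          have hAA : A'.1 = A := MaxNonU.apex_eq_of_mem_baseDirs S hGf hint A'.2 hA
            (hla_mem A'.1 A'.2) (h ▸ hpa_mem A hA)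
          subst hAA
          exact hlapa A'.1 hA h
        rw [Pi.single_apply, if_neg (Ne.symm hne), mul_zero]
      have := hev (pa A hA)
      rw [hfst, hsnd, add_zero] at this
      have hApa : 0 < A (pa A hA) := MaxNonU.apex_pos S hGf hint hA (hpa_mem A hA)
      rcases mul_eq_zero.1 this with h | h
      · exact h
      · exact absurd h hApa.ne'
    have hinr : ∀ A : {A // A ∈ apices E F}, g (Sum.inr A) = 0 := by
      intro A
      have hfst : ∑ v : {x // x ∈ G}, g (Sum.inl v) * (v : Fin n → ℝ) (la A.1 A.2)
          = g (Sum.inl ⟨A.1, hapexG A.1 A.2⟩) * A.1 (la A.1 A.2) := by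
        apply Fintype.sum_eq_single
        intro v hvne
        have hvA : (v : Fin n → ℝ) ≠ A.1 := fun h => hvne (Subtype.ext h)
        rw [hpriv A.1 A.2 (la A.1 A.2) (hla_mem A.1 A.2) v v.2 hvA, mul_zero]
      have hsnd : ∑ A' : {A // A ∈ apices E F}, g (Sum.inr A')
          * (Pi.single (la A'.1 A'.2) (1:ℝ) : Fin n → ℝ) (la A.1 A.2) = g (Sum.inr A) := by
        rw [Fintype.sum_eq_single A]
        · rw [Pi.single_apply, if_pos rfl, mul_one]
        · intro A' hA'ne
          have hne : la A'.1 A'.2 ≠ la A.1 A.2 := by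
            intro h
            have : A'.1 = A.1 := MaxNonU.apex_eq_of_mem_baseDirs S hGf hint A'.2 A.2
              (hla_mem A'.1 A'.2) (h ▸ hla_mem A.1 A.2)
            exact hA'ne (Subtype.ext this)
          rw [Pi.single_apply, if_neg (Ne.symm hne), mul_zero]
      have := hev (la A.1 A.2)
      rw [hfst, hsnd, hinl_apex A.1 A.2, zero_mul, zero_add] at this
      exact this
    have hfst_zero : ∑ v : {x // x ∈ G}, g (Sum.inl v) • (v : Fin n → ℝ) = 0 := by
      have hsnd_zero : ∑ A : {A // A ∈ apices E F},
          g (Sum.inr A) • (Pi.single (la A.1 A.2) (1:ℝ) : Fin n → ℝ) = 0 := by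
        apply Finset.sum_eq_zero
        intro A _
        rw [hinr A, zero_smul]
      rw [hsnd_zero, add_zero] at hg
      exact hg
    have hinl : ∀ v : {x // x ∈ G}, g (Sum.inl v) = 0 :=
      Fintype.linearIndependent_iff.1 (S.indep G hGf) (fun v => g (Sum.inl v)) hfst_zero
    intro i
    rcases i with v | A
    · exact hinl v
    · exact hinr A
  -- spanning
  have hspan : ⊤ ≤ Submodule.span ℝ (Set.range bb) := by
    set W := Submodule.span ℝ (Set.range bb) with hW
    have hGmem : ∀ v ∈ G, v ∈ W := by
      intro v hv
      apply Submodule.subset_span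
      exact ⟨Sum.inl ⟨v, hv⟩, rfl⟩
    have hRW : ∀ j : Fin n, (∀ A ∈ apices E F, j ∉ baseDirs E F A) →
        Pi.single j (1:ℝ) ∈ W := by
      intro j hj
      obtain ⟨c, hc⟩ := hR j hj
      rw [hc]
      exact Submodule.sum_mem _ fun v hv => Submodule.smul_mem _ _ (hGmem v hv)
    have hsingle : ∀ j : Fin n, Pi.single j (1:ℝ) ∈ W := by
      intro j
      by_cases hj : ∃ A ∈ apices E F, j ∈ baseDirs E F A
      · obtain ⟨A, hA, hjA⟩ := hj
        have hjla : j = la A hA ∨ j = pa A hA := by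
          have := hV A hA ▸ hjA
          rcases Finset.mem_insert.1 this with h | h
          · exact Or.inl h
          · exact Or.inr (Finset.mem_singleton.1 h)
        rcases hjla with rfl | rfl
        · apply Submodule.subset_span
          exact ⟨Sum.inr ⟨A, hA⟩, rfl⟩
        · -- j = pa A : use the relation coming from A itself
          have hApa : 0 < A (pa A hA) := MaxNonU.apex_pos S hGf hint hA (hpa_mem A hA)
          have hrel : (Pi.single (pa A hA) (1:ℝ) : Fin n → ℝ)
              = (A (pa A hA))⁻¹ • (A - ∑ i ∈ Finset.univ.erase (pa A hA),
                  A i • (Pi.single i (1:ℝ) : Fin n → ℝ)) := by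
            have h1 : A = ∑ i, A i • (Pi.single i (1:ℝ) : Fin n → ℝ) :=
              MaxNonU.eq_sum_single A
            have h2 : ∑ i, A i • (Pi.single i (1:ℝ) : Fin n → ℝ)
                = A (pa A hA) • (Pi.single (pa A hA) (1:ℝ) : Fin n → ℝ)
                  + ∑ i ∈ Finset.univ.erase (pa A hA),
                      A i • (Pi.single i (1:ℝ) : Fin n → ℝ) := by
              rw [← Finset.add_sum_erase _ _ (Finset.mem_univ (pa A hA))]
            have h4 : A (pa A hA) • (Pi.single (pa A hA) (1:ℝ) : Fin n → ℝ)
                = A - ∑ i ∈ Finset.univ.erase (pa A hA),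
                    A i • (Pi.single i (1:ℝ) : Fin n → ℝ) :=
              eq_sub_of_add_eq (h1.trans h2).symm
            rw [← h4, smul_smul, inv_mul_cancel₀ hApa.ne', one_smul]
          rw [hrel]
          apply Submodule.smul_mem
          apply Submodule.sub_mem
          · exact hGmem A (hapexG A hA)
          · apply Submodule.sum_mem
            intro i hi
            have hipa : i ≠ pa A hA := (Finset.mem_erase.1 hi).1
            by_cases hAi : A i = 0
            · rw [hAi, zero_smul]
              exact Submodule.zero_mem _
            · apply Submodule.smul_mem
              by_cases hiV : ∃ A' ∈ apices E F, i ∈ baseDirs E F A'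
              · obtain ⟨A', hA', hiA'⟩ := hiV
                have hAA' : A' = A := by
                  by_contra hne
                  exact hAi (hpriv A' hA' i hiA' A (hapexG A hA) (Ne.symm hne))
                subst hAA'
                have : i = la A' hA' ∨ i = pa A' hA' := by
                  have := hV A' hA' ▸ hiA'
                  rcases Finset.mem_insert.1 this with h | h
                  · exact Or.inl h
                  · exact Or.inr (Finset.mem_singleton.1 h)
                rcases this with rfl | h
                · apply Submodule.subset_span
                  exact ⟨Sum.inr ⟨A', hA'⟩, rfl⟩
                · exact absurd h hipa
              · push_neg at hiV
                exact hRW i hiV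
      · push_neg at hj
        exact hRW j hj
    intro x _
    rw [MaxNonU.eq_sum_single x]
    exact Submodule.sum_mem _ fun i _ => Submodule.smul_mem _ _ (hsingle i)
  -- conclude by counting
  have basis : Module.Basis ({x // x ∈ G} ⊕ {A // A ∈ apices E F}) ℝ (Fin n → ℝ) :=
    Module.Basis.mk hli hspan
  have h1 : Module.finrank ℝ (Fin n → ℝ)
      = Fintype.card ({x // x ∈ G} ⊕ {A // A ∈ apices E F}) :=
    Module.finrank_eq_card_basis basis
  have h2 : Module.finrank ℝ (Fin n → ℝ) = n := by
    rw [Module.finrank_fintype_fun_eq_card, Fintype.card_fin]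
  have h3 : Fintype.card ({x // x ∈ G} ⊕ {A // A ∈ apices E F})
      = G.card + (apices E F).card := by
    rw [Fintype.card_sum, Fintype.card_coe, Fintype.card_coe]
  have hn : n = G.card + (apices E F).card := by omega
  omega

end
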